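/- Let H be a subgraph of S with maximum degree at most 3 that contains no edge incident with a. Then S − E(H) contains a subgraph isomorphic to K4 or a subgraph isomorphic to a member of 𝒥. -/

import Mathlib

/-- The simple graph on `V` whose edges are the (symmetrized) pairs in the list `l`. -/
def graphOfList {V : Type*} (l : List (V × V)) : SimpleGraph V :=
  SimpleGraph.fromRel (fun x y => (x, y) ∈ l)

/-- The complete graph on four vertices. -/
def K4 : SimpleGraph (Fin 4) := ⊤

/-- `G` contains a subgraph isomorphic to the pattern graph `P`. -/
def ContainsSub {W V : Type*} (P : SimpleGraph W) (G : SimpleGraph V) : Prop :=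
  ∃ f : W ↪ V, ∀ ⦃a b : W⦄, P.Adj a b → G.Adj (f a) (f b)

/-- The member of the family 𝒥 determined by `s : Fin 6 → Bool`: vertices are
`a = Sum.inl 0`, `b = Sum.inl 1`, and `c i = Sum.inr (i,0)`, `d i = Sum.inr (i,1)`,
`e i = Sum.inr (i,2)`; the `i`-th copy is `J1` if `s i = true` and `J2` otherwise. -/
def Jfam (s : Fin 6 → Bool) : SimpleGraph (Sum (Fin 2) (Fin 6 × Fin 3)) :=
  SimpleGraph.fromRel (fun x y =>
    (x = Sum.inl 0 ∧ y = Sum.inl 1) ∨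
    ∃ i : Fin 6,
      (x = Sum.inl 0 ∧ y = Sum.inr (i, 0)) ∨
      (x = Sum.inl 1 ∧ y = Sum.inr (i, 0)) ∨
      (x = Sum.inl 0 ∧ y = Sum.inr (i, 2)) ∨
      (x = Sum.inl 1 ∧ y = Sum.inr (i, 2)) ∨
      (x = Sum.inr (i, 0) ∧ y = Sum.inr (i, 1)) ∨
      (x = Sum.inr (i, 1) ∧ y = Sum.inr (i, 2)) ∨
      (s i = true ∧ x = Sum.inl 0 ∧ y = Sum.inr (i, 1)) ∨
      (s i = false ∧ x = Sum.inl 1 ∧ y = Sum.inr (i, 1)))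

/-- The graph `J3`, with vertices `a,…,k` encoded as `0,…,10`. -/
def J3 : SimpleGraph (Fin 11) :=
  graphOfList [(0,1),
    (0,2), (0,3), (0,4), (0,5), (0,6),
    (1,2), (1,3), (1,4), (1,5), (1,6),
    (2,3), (3,4), (4,5), (5,6),
    (7,0), (7,3), (7,4),
    (8,0), (8,4), (8,5),
    (9,1), (9,3), (9,4),
    (10,1), (10,4), (10,5)]

/-- The map placing the `t`-th copy of `J3` into `S`: the handle vertices `a = 0` and
`b = 1` of `J3` go to the common handle vertices `Sum.inl 0` and `Sum.inl 1`, and the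
remaining nine vertices of the copy go to `Sum.inr (t, ·)`. -/
def mp (t : Fin 9) (m : Fin 11) : Sum (Fin 2) (Fin 9 × Fin 9) :=
  if m.val = 0 then Sum.inl 0
  else if m.val = 1 then Sum.inl 1
  else Sum.inr (t, ⟨m.val - 2, by have := m.isLt; omega⟩)

/-- The graph `S`, obtained from nine copies of `J3` by identifying the nine edges
corresponding to `ab` into the single edge joining `Sum.inl 0` and `Sum.inl 1`. -/
def S : SimpleGraph (Sum (Fin 2) (Fin 9 × Fin 9)) :=
  SimpleGraph.fromRel (fun x y =>
    ∃ t : Fin 9, ∃ p q : Fin 11, J3.Adj p q ∧ x = mp t p ∧ y = mp t q)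

instance : DecidableRel J3.Adj := fun a b =>
  decidable_of_iff _ (SimpleGraph.fromRel_adj _ a b).symm

lemma mp_injective : ∀ t : Fin 9, Function.Injective (mp t) := by decide

lemma S_adj (t : Fin 9) (p q : Fin 11) (h : J3.Adj p q) : S.Adj (mp t p) (mp t q) := by
  rw [S, SimpleGraph.fromRel_adj]
  exact ⟨fun hc => h.ne (mp_injective t hc), Or.inl ⟨t, p, q, h, rfl, rfl⟩⟩

lemma deg4 {V : Type*} [Finite V] {H : SimpleGraph V} {v w1 w2 w3 w4 : V}
    (hdeg : (H.neighborSet v).ncard ≤ 3)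
    (h1 : H.Adj v w1) (h2 : H.Adj v w2) (h3 : H.Adj v w3) (h4 : H.Adj v w4)
    (d12 : w1 ≠ w2) (d13 : w1 ≠ w3) (d14 : w1 ≠ w4)
    (d23 : w2 ≠ w3) (d24 : w2 ≠ w4) (d34 : w3 ≠ w4) : False := by
  have hsub : ({w1, w2, w3, w4} : Set V) ⊆ H.neighborSet v := by
    intro x hx
    simp only [Set.mem_insert_iff, Set.mem_singleton_iff] at hx
    rcases hx with rfl | rfl | rfl | rfl <;> assumption
  have hle := Set.ncard_le_ncard hsub (Set.toFinite _)
  have h4 : ({w1, w2, w3, w4} : Set V).ncard = 4 := by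
    rw [Set.ncard_insert_of_notMem (by simp [d12, d13, d14]),
      Set.ncard_insert_of_notMem (by simp [d23, d24]), Set.ncard_pair d34]
  omega

lemma K4_of {V : Type*} {G : SimpleGraph V} {v0 v1 v2 v3 : V}
    (h01 : G.Adj v0 v1) (h02 : G.Adj v0 v2) (h03 : G.Adj v0 v3)
    (h12 : G.Adj v1 v2) (h13 : G.Adj v1 v3) (h23 : G.Adj v2 v3) :
    ContainsSub K4 G := by
  refine ⟨⟨![v0, v1, v2, v3], ?_⟩, ?_⟩
  · intro i j hij
    fin_cases i <;> fin_cases j <;> simp_all <;>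
      first
      | rfl
      | exact absurd hij h01.ne | exact absurd hij h02.ne | exact absurd hij h03.ne
      | exact absurd hij h12.ne | exact absurd hij h13.ne | exact absurd hij h23.ne
      | exact absurd hij.symm h01.ne | exact absurd hij.symm h02.ne
      | exact absurd hij.symm h03.ne | exact absurd hij.symm h12.ne
      | exact absurd hij.symm h13.ne | exact absurd hij.symm h23.ne
  · intro a b hab
    have hne : a ≠ b := hab.ne
    fin_cases a <;> fin_cases b <;>
      first
      | exact absurd rfl hne
      | exact h01 | exact h02 | exact h03 | exact h12 | exact h13 | exact h23
      | exact h01.symm | exact h02.symm | exact h03.symm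
      | exact h12.symm | exact h13.symm | exact h23.symm

/-- Data for one copy: a surviving "option" path `x - y - z` with `x, z` joined to both
handle vertices and `y` joined to `a` (if `s = true`) or to `b` (if `s = false`). -/
structure Opt (G : SimpleGraph (Sum (Fin 2) (Fin 9 × Fin 9))) (t : Fin 9) (s : Bool)
    (x y z : Fin 9) : Prop where
  xy : x ≠ y
  yz : y ≠ z
  xz : x ≠ z
  ax : G.Adj (Sum.inl 0) (Sum.inr (t, x))
  bx : G.Adj (Sum.inl 1) (Sum.inr (t, x))
  az : G.Adj (Sum.inl 0) (Sum.inr (t, z))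
  bz : G.Adj (Sum.inl 1) (Sum.inr (t, z))
  pxy : G.Adj (Sum.inr (t, x)) (Sum.inr (t, y))
  pyz : G.Adj (Sum.inr (t, y)) (Sum.inr (t, z))
  ay : s = true → G.Adj (Sum.inl 0) (Sum.inr (t, y))
  by' : s = false → G.Adj (Sum.inl 1) (Sum.inr (t, y))

lemma copyLemma (H : SimpleGraph (Sum (Fin 2) (Fin 9 × Fin 9)))
    (hdeg : ∀ v, (H.neighborSet v).ncard ≤ 3)
    (hA : ∀ v, ¬ H.Adj (Sum.inl 0) v) (t : Fin 9)
    (hB : ∀ m : Fin 9, ¬ H.Adj (Sum.inl 1) (Sum.inr (t, m))) :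
    ContainsSub K4 (S \ H) ∨ ∃ (s : Bool) (x y z : Fin 9), Opt (S \ H) t s x y z := by
  -- shorthand for copy vertices
  set A : Sum (Fin 2) (Fin 9 × Fin 9) := Sum.inl 0 with hAdef
  set B : Sum (Fin 2) (Fin 9 × Fin 9) := Sum.inl 1 with hBdef
  have sdiff : ∀ u v, S.Adj u v → ¬ H.Adj u v → (S \ H).Adj u v := by
    intro u v h1 h2; rw [SimpleGraph.sdiff_adj]; exact ⟨h1, h2⟩
  -- surviving edges from the handle
  have hAm : ∀ (p : Fin 11) (m : Fin 9), S.Adj A (Sum.inr (t, m)) →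
      (S \ H).Adj A (Sum.inr (t, m)) := fun p m hs => sdiff _ _ hs (hA _)
  have hBm : ∀ (m : Fin 9), S.Adj B (Sum.inr (t, m)) →
      (S \ H).Adj B (Sum.inr (t, m)) := fun m hs => sdiff _ _ hs (hB _)
  have aAB : (S \ H).Adj A B := sdiff _ _ (S_adj t 0 1 (by decide)) (hA _)
  have aA0 : (S \ H).Adj A (Sum.inr (t, 0)) := hAm 2 0 (S_adj t 0 2 (by decide))
  have aA1 : (S \ H).Adj A (Sum.inr (t, 1)) := hAm 3 1 (S_adj t 0 3 (by decide))
  have aA2 : (S \ H).Adj A (Sum.inr (t, 2)) := hAm 4 2 (S_adj t 0 4 (by decide))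
  have aA3 : (S \ H).Adj A (Sum.inr (t, 3)) := hAm 5 3 (S_adj t 0 5 (by decide))
  have aA4 : (S \ H).Adj A (Sum.inr (t, 4)) := hAm 6 4 (S_adj t 0 6 (by decide))
  have aA5 : (S \ H).Adj A (Sum.inr (t, 5)) := hAm 7 5 (S_adj t 0 7 (by decide))
  have aA6 : (S \ H).Adj A (Sum.inr (t, 6)) := hAm 8 6 (S_adj t 0 8 (by decide))
  have aB0 : (S \ H).Adj B (Sum.inr (t, 0)) := hBm 0 (S_adj t 1 2 (by decide))
  have aB1 : (S \ H).Adj B (Sum.inr (t, 1)) := hBm 1 (S_adj t 1 3 (by decide))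
  have aB2 : (S \ H).Adj B (Sum.inr (t, 2)) := hBm 2 (S_adj t 1 4 (by decide))
  have aB3 : (S \ H).Adj B (Sum.inr (t, 3)) := hBm 3 (S_adj t 1 5 (by decide))
  have aB4 : (S \ H).Adj B (Sum.inr (t, 4)) := hBm 4 (S_adj t 1 6 (by decide))
  have aB7 : (S \ H).Adj B (Sum.inr (t, 7)) := hBm 7 (S_adj t 1 9 (by decide))
  have aB8 : (S \ H).Adj B (Sum.inr (t, 8)) := hBm 8 (S_adj t 1 10 (by decide))
  -- case analysis on the path edges cd, de, ef, fg
  by_cases hCD : H.Adj (Sum.inr (t, 0)) (Sum.inr (t, 1))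
  case neg =>
    exact Or.inl (K4_of aAB aA0 aA1 aB0 aB1 (sdiff _ _ (S_adj t 2 3 (by decide)) hCD))
  by_cases hDE : H.Adj (Sum.inr (t, 1)) (Sum.inr (t, 2))
  case neg =>
    exact Or.inl (K4_of aAB aA1 aA2 aB1 aB2 (sdiff _ _ (S_adj t 3 4 (by decide)) hDE))
  by_cases hEF : H.Adj (Sum.inr (t, 2)) (Sum.inr (t, 3))
  case neg =>
    exact Or.inl (K4_of aAB aA2 aA3 aB2 aB3 (sdiff _ _ (S_adj t 4 5 (by decide)) hEF))
  by_cases hFG : H.Adj (Sum.inr (t, 3)) (Sum.inr (t, 4))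
  case neg =>
    exact Or.inl (K4_of aAB aA3 aA4 aB3 aB4 (sdiff _ _ (S_adj t 5 6 (by decide)) hFG))
  -- all four path edges are in H: find a surviving option
  right
  by_cases h1 : H.Adj (Sum.inr (t, 1)) (Sum.inr (t, 5)) ∨ H.Adj (Sum.inr (t, 5)) (Sum.inr (t, 2))
  case neg =>
    rw [not_or] at h1
    exact ⟨true, 1, 5, 2, (by decide), (by decide), (by decide), aA1, aB1, aA2, aB2,
      sdiff _ _ (S_adj t 3 7 (by decide)) h1.1, sdiff _ _ (S_adj t 7 4 (by decide)) h1.2,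
      fun _ => aA5, fun h => by simp at h⟩
  by_cases h2 : H.Adj (Sum.inr (t, 1)) (Sum.inr (t, 7)) ∨ H.Adj (Sum.inr (t, 7)) (Sum.inr (t, 2))
  case neg =>
    rw [not_or] at h2
    exact ⟨false, 1, 7, 2, (by decide), (by decide), (by decide), aA1, aB1, aA2, aB2,
      sdiff _ _ (S_adj t 3 9 (by decide)) h2.1, sdiff _ _ (S_adj t 9 4 (by decide)) h2.2,
      fun h => by simp at h, fun _ => aB7⟩
  by_cases h3 : H.Adj (Sum.inr (t, 2)) (Sum.inr (t, 6)) ∨ H.Adj (Sum.inr (t, 6)) (Sum.inr (t, 3))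
  case neg =>
    rw [not_or] at h3
    exact ⟨true, 2, 6, 3, (by decide), (by decide), (by decide), aA2, aB2, aA3, aB3,
      sdiff _ _ (S_adj t 4 8 (by decide)) h3.1, sdiff _ _ (S_adj t 8 5 (by decide)) h3.2,
      fun _ => aA6, fun h => by simp at h⟩
  by_cases h4 : H.Adj (Sum.inr (t, 2)) (Sum.inr (t, 8)) ∨ H.Adj (Sum.inr (t, 8)) (Sum.inr (t, 3))
  case neg =>
    rw [not_or] at h4
    exact ⟨false, 2, 8, 3, (by decide), (by decide), (by decide), aA2, aB2, aA3, aB3,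
      sdiff _ _ (S_adj t 4 10 (by decide)) h4.1, sdiff _ _ (S_adj t 10 5 (by decide)) h4.2,
      fun h => by simp at h, fun _ => aB8⟩
  -- all options blocked: contradiction with the degree bound
  exfalso
  rcases h1 with hDH | hHE
  · rcases h2 with hDJ | hJE
    · exact deg4 (hdeg _) hCD.symm hDE hDH hDJ (by simp) (by simp) (by simp) (by simp)
        (by simp) (by simp)
    · rcases h3 with hEI | hIF
      · exact deg4 (hdeg _) hDE.symm hEF hJE.symm hEI (by simp) (by simp) (by simp)
          (by simp) (by simp) (by simp)
      · rcases h4 with hEK | hKF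
        · exact deg4 (hdeg _) hDE.symm hEF hJE.symm hEK (by simp) (by simp) (by simp)
            (by simp) (by simp) (by simp)
        · exact deg4 (hdeg _) hEF.symm hFG hIF.symm hKF.symm (by simp) (by simp) (by simp)
            (by simp) (by simp) (by simp)
  · rcases h2 with hDJ | hJE
    · rcases h3 with hEI | hIF
      · exact deg4 (hdeg _) hDE.symm hEF hHE.symm hEI (by simp) (by simp) (by simp)
          (by simp) (by simp) (by simp)
      · rcases h4 with hEK | hKF
        · exact deg4 (hdeg _) hDE.symm hEF hHE.symm hEK (by simp) (by simp) (by simp)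
            (by simp) (by simp) (by simp)
        · exact deg4 (hdeg _) hEF.symm hFG hIF.symm hKF.symm (by simp) (by simp) (by simp)
            (by simp) (by simp) (by simp)
    · exact deg4 (hdeg _) hDE.symm hEF hHE.symm hJE.symm (by simp) (by simp) (by simp)
        (by simp) (by simp) (by simp)

/-- If `H` is a subgraph of `S` of maximum degree at most 3 containing no edge incident
with `a`, then `S − E(H)` contains a copy of `K4` or a copy of a member of 𝒥. -/
theorem statement2 (H : SimpleGraph (Sum (Fin 2) (Fin 9 × Fin 9))) (hle : H ≤ S)
    (hdeg : ∀ v, (H.neighborSet v).ncard ≤ 3)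
    (hA : ∀ v, ¬ H.Adj (Sum.inl 0) v) :
    ContainsSub K4 (S \ H) ∨ ∃ s : Fin 6 → Bool, ContainsSub (Jfam s) (S \ H) := by
  classical
  -- the set of copies touched by an H-edge at b has at most 3 elements
  set TF : Finset (Fin 9) :=
    Finset.univ.filter (fun t => ∃ m : Fin 9, H.Adj (Sum.inl 1) (Sum.inr (t, m))) with hTFdef
  have hTFcard : TF.card ≤ 3 := by
    have hfin : (H.neighborSet (Sum.inl 1)).Finite := Set.toFinite _
    have step : TF.card ≤ hfin.toFinset.card := by
      apply Finset.card_le_card_of_injOn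
        (fun t => Sum.inr (t, if h : ∃ m : Fin 9, H.Adj (Sum.inl 1) (Sum.inr (t, m))
          then h.choose else 0))
      · intro t ht
        have hex := (Finset.mem_filter.mp ht).2
        rw [Finset.mem_coe, Set.Finite.mem_toFinset]
        simp only [dif_pos hex]
        exact hex.choose_spec
      · intro t1 _ t2 _ heq
        simpa using congrArg (fun x => Sum.elim (fun _ => t1) Prod.fst x) heq
    calc TF.card ≤ hfin.toFinset.card := step
      _ = (H.neighborSet (Sum.inl 1)).ncard := (Set.ncard_eq_toFinset_card _ hfin).symm
      _ ≤ 3 := hdeg _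
  have hcompl : 6 ≤ TFᶜ.card := by
    have := Finset.card_compl TF
    simp only [Fintype.card_fin] at this
    omega
  obtain ⟨T6, hT6sub, hT6card⟩ := Finset.exists_subset_card_eq hcompl
  set eq6 := T6.equivFinOfCardEq hT6card with heq6
  set g : Fin 6 → Fin 9 := fun i => (eq6.symm i : Fin 9) with hgdef
  have ginj : Function.Injective g := fun i j h =>
    eq6.symm.injective (Subtype.ext h)
  have gclean : ∀ (i : Fin 6) (m : Fin 9), ¬ H.Adj (Sum.inl 1) (Sum.inr (g i, m)) := by
    intro i m hadj
    have hmem : g i ∈ TFᶜ := hT6sub (eq6.symm i).2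
    rw [Finset.mem_compl, hTFdef, Finset.mem_filter] at hmem
    exact hmem ⟨Finset.mem_univ _, ⟨m, hadj⟩⟩
  by_cases hK : ContainsSub K4 (S \ H)
  · exact Or.inl hK
  have hopt : ∀ i : Fin 6, ∃ (s : Bool) (x y z : Fin 9), Opt (S \ H) (g i) s x y z :=
    fun i => (copyLemma H hdeg hA (g i) (gclean i)).resolve_left hK
  choose s xx yy zz ho using hopt
  right
  refine ⟨s, ⟨fun v => Sum.elim (fun j => (Sum.inl j : Sum (Fin 2) (Fin 9 × Fin 9)))
    (fun p => Sum.inr (g p.1, ![xx p.1, yy p.1, zz p.1] p.2)) v, ?_⟩, ?_⟩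
  · -- injectivity
    rintro (u | ⟨i, m⟩) (v | ⟨j, n⟩) h
    · simpa using h
    · simp at h
    · simp at h
    · simp only [Sum.elim_inr, Sum.inr.injEq, Prod.mk.injEq] at h
      obtain ⟨hg, hw⟩ := h
      obtain rfl : i = j := ginj hg
      have h1 := (ho i).xy
      have h2 := (ho i).yz
      have h3 := (ho i).xz
      have hmn : m = n := by fin_cases m <;> fin_cases n <;> simp_all
      rw [hmn]
  · -- adjacency
    have core : ∀ a b : Sum (Fin 2) (Fin 6 × Fin 3),
        ((a = Sum.inl 0 ∧ b = Sum.inl 1) ∨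
        ∃ i : Fin 6,
          (a = Sum.inl 0 ∧ b = Sum.inr (i, 0)) ∨
          (a = Sum.inl 1 ∧ b = Sum.inr (i, 0)) ∨
          (a = Sum.inl 0 ∧ b = Sum.inr (i, 2)) ∨
          (a = Sum.inl 1 ∧ b = Sum.inr (i, 2)) ∨
          (a = Sum.inr (i, 0) ∧ b = Sum.inr (i, 1)) ∨
          (a = Sum.inr (i, 1) ∧ b = Sum.inr (i, 2)) ∨
          (s i = true ∧ a = Sum.inl 0 ∧ b = Sum.inr (i, 1)) ∨
          (s i = false ∧ a = Sum.inl 1 ∧ b = Sum.inr (i, 1))) →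
        (S \ H).Adj
          (Sum.elim (fun j => (Sum.inl j : Sum (Fin 2) (Fin 9 × Fin 9)))
            (fun p => Sum.inr (g p.1, ![xx p.1, yy p.1, zz p.1] p.2)) a)
          (Sum.elim (fun j => (Sum.inl j : Sum (Fin 2) (Fin 9 × Fin 9)))
            (fun p => Sum.inr (g p.1, ![xx p.1, yy p.1, zz p.1] p.2)) b) := by
      rintro a b (⟨rfl, rfl⟩ | ⟨i, h⟩)
      · exact SimpleGraph.sdiff_adj .. |>.mpr ⟨S_adj 0 0 1 (by decide), hA _⟩
      rcases h with ⟨rfl, rfl⟩ | ⟨rfl, rfl⟩ | ⟨rfl, rfl⟩ | ⟨rfl, rfl⟩ | ⟨rfl, rfl⟩ |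
        ⟨rfl, rfl⟩ | ⟨hs, rfl, rfl⟩ | ⟨hs, rfl, rfl⟩
      · exact (ho i).ax
      · exact (ho i).bx
      · exact (ho i).az
      · exact (ho i).bz
      · exact (ho i).pxy
      · exact (ho i).pyz
      · exact (ho i).ay hs
      · exact (ho i).by' hs
    intro a b hab
    rw [Jfam, SimpleGraph.fromRel_adj] at hab
    obtain ⟨-, h | h⟩ := hab
    · exact core a b h
    · exact (core b a h).symm
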